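/- Let N ≥ 1, fix a coordinate x₀, and let P : ℝ^N → ℝ^N satisfy monotonicity, strict monotonicity, and constant additivity. If for some f ∈ ℝ^N the vector g ∈ ℝ^N is a finite accumulation point of the sequence f_n := P^n f − P^n f(x₀)·𝟙, then Pg − g is a constant vector, i.e., there exists λ ∈ ℝ with Pg = g + λ·𝟙 (and hence P^n g = g + nλ·𝟙 for all n). -/

import Mathlib

open Filter Finset

theorem stmt9 (N : ℕ) (hN : 1 ≤ N) (x₀ : Fin N) (P : (Fin N → ℝ) → (Fin N → ℝ))
    (mono : ∀ f g : Fin N → ℝ, (∀ x, g x ≤ f x) → ∀ x, P g x ≤ P f x)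
    (smono : ∀ f g : Fin N → ℝ, (∀ x, g x ≤ f x) → ∀ x, g x < f x → P g x < P f x)
    (cadd : ∀ (f : Fin N → ℝ) (c : ℝ), P (fun x => f x + c) = fun x => P f x + c)
    (f g : Fin N → ℝ) (φ : ℕ → ℕ) (hφ : StrictMono φ)
    (hacc : Tendsto (fun k => fun x => P^[φ k] f x - P^[φ k] f x₀) atTop (nhds g)) :
    ∃ lam : ℝ, P g = (fun x => g x + lam) ∧
      ∀ n : ℕ, P^[n] g = fun x => g x + n * lam := by
  haveI : Nonempty (Fin N) := ⟨⟨0, hN⟩⟩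
  have hne : (univ : Finset (Fin N)).Nonempty := univ_nonempty
  set fk : ℕ → Fin N → ℝ := fun k x => P^[φ k] f x - P^[φ k] f x₀ with hfk
  have hco : ∀ x, Tendsto (fun k => fk k x) atTop (nhds (g x)) := by
    rw [tendsto_pi_nhds] at hacc; exact hacc
  -- iterated constant additivity
  have caddIter : ∀ (n : ℕ) (h : Fin N → ℝ) (c : ℝ),
      P^[n] (fun x => h x + c) = fun x => P^[n] h x + c := by
    intro n
    induction n with
    | zero => intro h c; simp
    | succ n ih =>
      intro h c
      rw [Function.iterate_succ_apply, Function.iterate_succ_apply, cadd, ih]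
  -- nonexpansiveness
  have key : ∀ (u v : Fin N → ℝ) (d : ℝ), (∀ x, |u x - v x| ≤ d) →
      ∀ x, |P u x - P v x| ≤ d := by
    intro u v d hd x
    have h1 : ∀ y, u y ≤ v y + d := fun y => by
      have := abs_le.1 (hd y); linarith [this.1, this.2]
    have h2 : ∀ y, v y ≤ u y + d := fun y => by
      have := abs_le.1 (hd y); linarith [this.1, this.2]
    have H1 : P u x ≤ P v x + d := by
      have := mono (fun y => v y + d) u h1 x
      rwa [cadd] at this
    have H2 : P v x ≤ P u x + d := by
      have := mono (fun y => u y + d) v h2 x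
      rwa [cadd] at this
    exact abs_le.2 ⟨by linarith, by linarith⟩
  have keyIter : ∀ (n : ℕ) (u v : Fin N → ℝ) (d : ℝ), (∀ x, |u x - v x| ≤ d) →
      ∀ x, |P^[n] u x - P^[n] v x| ≤ d := by
    intro n
    induction n with
    | zero => intro u v d hd; simpa using hd
    | succ n ih =>
      intro u v d hd x
      rw [Function.iterate_succ_apply', Function.iterate_succ_apply']
      exact key _ _ _ (ih u v d hd) x
  -- the distance sequence
  set D : ℕ → ℝ := fun k => ∑ y, |fk k y - g y| with hD
  have hDcoord : ∀ k x, |fk k x - g x| ≤ D k := fun k x =>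
    Finset.single_le_sum (f := fun y => |fk k y - g y|) (fun y _ => abs_nonneg _) (mem_univ x)
  have hD0 : Tendsto D atTop (nhds 0) := by
    have h : ∀ y : Fin N, Tendsto (fun k => |fk k y - g y|) atTop (nhds 0) := by
      intro y
      have := (hco y).sub_const (g y)
      simpa using this.abs
    have := tendsto_finset_sum (univ : Finset (Fin N)) (fun y _ => h y)
    simpa using this
  -- sup and inf of increments along the orbit of f
  set b : ℕ → ℝ := fun n => univ.sup' hne (fun x => P^[n+1] f x - P^[n] f x) with hb
  set a : ℕ → ℝ := fun n => univ.inf' hne (fun x => P^[n+1] f x - P^[n] f x) with ha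
  have hbub : ∀ n x, P^[n+1] f x - P^[n] f x ≤ b n := fun n x =>
    le_sup' (fun x => P^[n+1] f x - P^[n] f x) (mem_univ x)
  have halb : ∀ n x, a n ≤ P^[n+1] f x - P^[n] f x := fun n x =>
    inf'_le (fun x => P^[n+1] f x - P^[n] f x) (mem_univ x)
  have hstepb : ∀ (u : Fin N → ℝ) (d : ℝ), (∀ x, P u x - u x ≤ d) →
      ∀ x, P (P u) x - P u x ≤ d := by
    intro u d hd x
    have h1 : ∀ y, P u y ≤ u y + d := fun y => by linarith [hd y]
    have h2 : P (P u) x ≤ P u x + d := by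
      have := mono (fun y => u y + d) (P u) h1 x
      rwa [cadd] at this
    linarith
  have hstepa : ∀ (u : Fin N → ℝ) (d : ℝ), (∀ x, d ≤ P u x - u x) →
      ∀ x, d ≤ P (P u) x - P u x := by
    intro u d hd x
    have h1 : ∀ y, u y + d ≤ P u y := fun y => by linarith [hd y]
    have h2 : P u x + d ≤ P (P u) x := by
      have := mono (P u) (fun y => u y + d) h1 x
      rwa [cadd] at this
    linarith
  have hbanti : Antitone b := by
    apply antitone_nat_of_succ_le
    intro n
    apply Finset.sup'_le
    intro x _
    have hb' : ∀ y, P (P^[n] f) y - P^[n] f y ≤ b n := by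
      intro y
      rw [← Function.iterate_succ_apply' P n f]
      exact hbub n y
    have h := hstepb (P^[n] f) (b n) hb' x
    rw [← Function.iterate_succ_apply' P n f, ← Function.iterate_succ_apply' P (n+1) f] at h
    exact h
  have hamono : Monotone a := by
    apply monotone_nat_of_le_succ
    intro n
    apply Finset.le_inf'
    intro x _
    have ha' : ∀ y, a n ≤ P (P^[n] f) y - P^[n] f y := by
      intro y
      rw [← Function.iterate_succ_apply' P n f]
      exact halb n y
    have h := hstepa (P^[n] f) (a n) ha' x
    rw [← Function.iterate_succ_apply' P n f, ← Function.iterate_succ_apply' P (n+1) f] at h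
    exact h
  have haleb : ∀ n, a n ≤ b n := fun n => by
    obtain ⟨x⟩ := (inferInstance : Nonempty (Fin N))
    exact (halb n x).trans (hbub n x)
  have hbbdd : BddBelow (Set.range b) := by
    refine ⟨a 0, ?_⟩
    rintro _ ⟨n, rfl⟩
    exact (hamono (Nat.zero_le n)).trans (haleb n)
  have habdd : BddAbove (Set.range a) := by
    refine ⟨b 0, ?_⟩
    rintro _ ⟨n, rfl⟩
    exact (haleb n).trans (hbanti (Nat.zero_le n))
  set β : ℝ := ⨅ n, b n with hβ
  set α : ℝ := ⨆ n, a n with hα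
  have hbL : Tendsto b atTop (nhds β) := tendsto_atTop_ciInf hbanti hbbdd
  have haL : Tendsto a atTop (nhds α) := tendsto_atTop_ciSup hamono habdd
  -- iterates of fk in terms of the orbit of f
  have hfkIter : ∀ (j k : ℕ) (x : Fin N), P^[j] (fk k) x = P^[j + φ k] f x - P^[φ k] f x₀ := by
    intro j k x
    have h0 : fk k = fun y => P^[φ k] f y + (-(P^[φ k] f x₀)) := by
      funext y; simp [hfk, sub_eq_add_neg]
    rw [h0, caddIter j, Function.iterate_add_apply]
    ring
  -- sup'/inf' comparison helpers
  have hsupmono : ∀ (u v : Fin N → ℝ) (e : ℝ), (∀ x, u x ≤ v x + e) →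
      univ.sup' hne u ≤ univ.sup' hne v + e := by
    intro u v e h
    apply Finset.sup'_le
    intro x _
    exact (h x).trans (add_le_add_left (le_sup' v (mem_univ x)) e)
  have hinfmono : ∀ (u v : Fin N → ℝ) (e : ℝ), (∀ x, u x ≤ v x + e) →
      univ.inf' hne u ≤ univ.inf' hne v + e := by
    intro u v e h
    obtain ⟨x, _, hx⟩ := Finset.exists_mem_eq_inf' hne v
    calc univ.inf' hne u ≤ u x := inf'_le u (mem_univ x)
      _ ≤ v x + e := h x
      _ = univ.inf' hne v + e := by rw [hx]
  have hsupabs : ∀ (u v : Fin N → ℝ) (e : ℝ), (∀ x, |u x - v x| ≤ e) →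
      |univ.sup' hne u - univ.sup' hne v| ≤ e := by
    intro u v e h
    rw [abs_le]
    constructor
    · have := hsupmono v u e (fun x => by have := abs_le.1 (h x); linarith [this.1])
      linarith
    · have := hsupmono u v e (fun x => by have := abs_le.1 (h x); linarith [this.2])
      linarith
  have hinfabs : ∀ (u v : Fin N → ℝ) (e : ℝ), (∀ x, |u x - v x| ≤ e) →
      |univ.inf' hne u - univ.inf' hne v| ≤ e := by
    intro u v e h
    rw [abs_le]
    constructor
    · have := hinfmono v u e (fun x => by have := abs_le.1 (h x); linarith [this.1])
      linarith
    · have := hinfmono u v e (fun x => by have := abs_le.1 (h x); linarith [this.2])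
      linarith
  -- coordinatewise closeness of increments
  have hcoordclose : ∀ (j k : ℕ) (x : Fin N),
      |(P^[j+1] (fk k) x - P^[j] (fk k) x) - (P^[j+1] g x - P^[j] g x)| ≤ 2 * D k := by
    intro j k x
    have h1 := keyIter (j+1) (fk k) g (D k) (hDcoord k) x
    have h2 := keyIter j (fk k) g (D k) (hDcoord k) x
    calc |(P^[j+1] (fk k) x - P^[j] (fk k) x) - (P^[j+1] g x - P^[j] g x)|
        = |(P^[j+1] (fk k) x - P^[j+1] g x) - (P^[j] (fk k) x - P^[j] g x)| := by ring_nf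
      _ ≤ |P^[j+1] (fk k) x - P^[j+1] g x| + |P^[j] (fk k) x - P^[j] g x| := abs_sub _ _
      _ ≤ 2 * D k := by linarith
  have hbfk : ∀ (j k : ℕ), b (φ k + j) = univ.sup' hne (fun x => P^[j+1] (fk k) x - P^[j] (fk k) x) := by
    intro j k
    simp only [hb]
    congr 1
    funext x
    rw [hfkIter (j+1) k x, hfkIter j k x]
    have e1 : j + 1 + φ k = φ k + j + 1 := by omega
    have e2 : j + φ k = φ k + j := by omega
    rw [e1, e2]
    ring
  have hafk : ∀ (j k : ℕ), a (φ k + j) = univ.inf' hne (fun x => P^[j+1] (fk k) x - P^[j] (fk k) x) := by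
    intro j k
    simp only [ha]
    congr 1
    funext x
    rw [hfkIter (j+1) k x, hfkIter j k x]
    have e1 : j + 1 + φ k = φ k + j + 1 := by omega
    have e2 : j + φ k = φ k + j := by omega
    rw [e1, e2]
    ring
  have hφtop : Tendsto φ atTop atTop :=
    tendsto_atTop_mono (fun k => hφ.le_apply) tendsto_id
  have hφjtop : ∀ j : ℕ, Tendsto (fun k => φ k + j) atTop atTop := fun j =>
    tendsto_atTop_mono (fun k => Nat.le_add_right (φ k) j) hφtop
  have hsj : ∀ j, univ.sup' hne (fun x => P^[j+1] g x - P^[j] g x) = β := by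
    intro j
    have hb1 : ∀ k, |b (φ k + j) - univ.sup' hne (fun x => P^[j+1] g x - P^[j] g x)| ≤ 2 * D k := by
      intro k
      rw [hbfk j k]
      exact hsupabs _ _ _ (fun x => hcoordclose j k x)
    have h1 : Tendsto (fun k => b (φ k + j)) atTop (nhds β) := hbL.comp (hφjtop j)
    have h2 : Tendsto (fun k => b (φ k + j)) atTop
        (nhds (univ.sup' hne (fun x => P^[j+1] g x - P^[j] g x))) := by
      have h0 : Tendsto (fun k => b (φ k + j) - univ.sup' hne (fun x => P^[j+1] g x - P^[j] g x))
          atTop (nhds 0) :=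
        squeeze_zero_norm hb1 (by simpa using hD0.const_mul 2)
      have := h0.add_const (univ.sup' hne (fun x => P^[j+1] g x - P^[j] g x))
      simpa using this
    exact tendsto_nhds_unique h2 h1
  have htj : ∀ j, univ.inf' hne (fun x => P^[j+1] g x - P^[j] g x) = α := by
    intro j
    have hb1 : ∀ k, |a (φ k + j) - univ.inf' hne (fun x => P^[j+1] g x - P^[j] g x)| ≤ 2 * D k := by
      intro k
      rw [hafk j k]
      exact hinfabs _ _ _ (fun x => hcoordclose j k x)
    have h1 : Tendsto (fun k => a (φ k + j)) atTop (nhds α) := haL.comp (hφjtop j)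
    have h2 : Tendsto (fun k => a (φ k + j)) atTop
        (nhds (univ.inf' hne (fun x => P^[j+1] g x - P^[j] g x))) := by
      have h0 : Tendsto (fun k => a (φ k + j) - univ.inf' hne (fun x => P^[j+1] g x - P^[j] g x))
          atTop (nhds 0) :=
        squeeze_zero_norm hb1 (by simpa using hD0.const_mul 2)
      have := h0.add_const (univ.inf' hne (fun x => P^[j+1] g x - P^[j] g x))
      simpa using this
    exact tendsto_nhds_unique h2 h1
  -- basic bounds on increments of g's orbit
  have hgub : ∀ j x, P^[j+1] g x - P^[j] g x ≤ β := by
    intro j x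
    rw [← hsj j]
    exact le_sup' (fun x => P^[j+1] g x - P^[j] g x) (mem_univ x)
  have hglb : ∀ j x, α ≤ P^[j+1] g x - P^[j] g x := by
    intro j x
    rw [← htj j]
    exact inf'_le (fun x => P^[j+1] g x - P^[j] g x) (mem_univ x)
  have hgexS : ∀ j, ∃ x, P^[j+1] g x - P^[j] g x = β := by
    intro j
    obtain ⟨x, _, hx⟩ := Finset.exists_mem_eq_sup' hne (fun x => P^[j+1] g x - P^[j] g x)
    exact ⟨x, (hx.symm.trans (hsj j) : _)⟩
  have hgexT : ∀ j, ∃ x, P^[j+1] g x - P^[j] g x = α := by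
    intro j
    obtain ⟨x, _, hx⟩ := Finset.exists_mem_eq_inf' hne (fun x => P^[j+1] g x - P^[j] g x)
    exact ⟨x, (hx.symm.trans (htj j) : _)⟩
  have hαβ : α ≤ β := by
    obtain ⟨x, hx⟩ := hgexS 0
    rw [← hx]; exact hglb 0 x
  -- main dichotomy
  rcases eq_or_lt_of_le hαβ with heq | hlt
  · -- α = β : Pg = g + β
    have h1 : ∀ x, P g x = g x + β := by
      intro x
      have ha1 := hgub 0 x
      have ha2 := hglb 0 x
      simp only [zero_add, Function.iterate_one, Function.iterate_zero, id_eq] at ha1 ha2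
      rw [heq] at ha2
      linarith
    refine ⟨β, funext h1, ?_⟩
    intro n
    induction n with
    | zero => simp
    | succ n ih =>
      rw [Function.iterate_succ_apply', ih, cadd]
      funext x
      rw [h1 x]
      push_cast
      ring
  · -- α < β : contradiction
    exfalso
    have hstepS : ∀ j x, P^[j+1+1] g x - P^[j+1] g x = β → P^[j+1] g x - P^[j] g x = β := by
      intro j x h
      by_contra h'
      have hx : P^[j+1] g x < P^[j] g x + β :=
        lt_of_le_of_ne (by linarith [hgub j x]) (fun hc => h' (by linarith))
      have hle : ∀ y, P^[j+1] g y ≤ P^[j] g y + β := fun y => by linarith [hgub j y]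
      have hlt2 : P (P^[j+1] g) x < P (P^[j] g) x + β := by
        have := smono (fun y => P^[j] g y + β) (P^[j+1] g) hle x hx
        rwa [cadd] at this
      rw [← Function.iterate_succ_apply' P j g, ← Function.iterate_succ_apply' P (j+1) g] at hlt2
      linarith
    have hstepT : ∀ j x, P^[j+1+1] g x - P^[j+1] g x = α → P^[j+1] g x - P^[j] g x = α := by
      intro j x h
      by_contra h'
      have hx : P^[j] g x + α < P^[j+1] g x :=
        lt_of_le_of_ne (by linarith [hglb j x]) (fun hc => h' (by linarith))
      have hle : ∀ y, P^[j] g y + α ≤ P^[j+1] g y := fun y => by linarith [hglb j y]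
      have hlt2 : P (P^[j] g) x + α < P (P^[j+1] g) x := by
        have := smono (P^[j+1] g) (fun y => P^[j] g y + α) hle x hx
        rwa [cadd] at this
      rw [← Function.iterate_succ_apply' P j g, ← Function.iterate_succ_apply' P (j+1) g] at hlt2
      linarith
    have hdownS : ∀ d j x, P^[j+d+1] g x - P^[j+d] g x = β → P^[j+1] g x - P^[j] g x = β := by
      intro d
      induction d with
      | zero => intro j x h; exact h
      | succ d ih =>
        intro j x h
        apply hstepS
        apply ih (j+1) x
        have e : j + (d+1) = j + 1 + d := by omega
        rw [e] at h
        exact h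
    have hdownT : ∀ d j x, P^[j+d+1] g x - P^[j+d] g x = α → P^[j+1] g x - P^[j] g x = α := by
      intro d
      induction d with
      | zero => intro j x h; exact h
      | succ d ih =>
        intro j x h
        apply hstepT
        apply ih (j+1) x
        have e : j + (d+1) = j + 1 + d := by omega
        rw [e] at h
        exact h
    have hA : ∃ xa : Fin N, ∀ j, P^[j+1] g xa - P^[j] g xa = β := by
      choose xs hxs using hgexS
      obtain ⟨y, hy⟩ := Finite.exists_infinite_fiber xs
      rw [Set.infinite_coe_iff] at hy
      refine ⟨y, fun j => ?_⟩
      obtain ⟨j', hj'mem, hj'⟩ := hy.exists_gt j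
      have hxj' : xs j' = y := hj'mem
      apply hdownS (j' - j) j y
      rw [show j + (j' - j) = j' from by omega, ← hxj']
      exact hxs j'
    have hB : ∃ xb : Fin N, ∀ j, P^[j+1] g xb - P^[j] g xb = α := by
      choose xs hxs using hgexT
      obtain ⟨y, hy⟩ := Finite.exists_infinite_fiber xs
      rw [Set.infinite_coe_iff] at hy
      refine ⟨y, fun j => ?_⟩
      obtain ⟨j', hj'mem, hj'⟩ := hy.exists_gt j
      have hxj' : xs j' = y := hj'mem
      apply hdownT (j' - j) j y
      rw [show j + (j' - j) = j' from by omega, ← hxj']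
      exact hxs j'
    obtain ⟨xa, hxa⟩ := hA
    obtain ⟨xb, hxb⟩ := hB
    have htelA : ∀ m : ℕ, P^[m] g xa - g xa = m * β := by
      intro m
      induction m with
      | zero => simp
      | succ m ih =>
        have := hxa m
        push_cast
        linarith
    have htelB : ∀ m : ℕ, P^[m] g xb - g xb = m * α := by
      intro m
      induction m with
      | zero => simp
      | succ m ih =>
        have := hxb m
        push_cast
        linarith
    have hε : (0:ℝ) < β - α := by linarith
    obtain ⟨n, hn⟩ := exists_nat_gt ((2 * D 0 + 2) / (β - α))
    have hnε : 2 * D 0 + 2 < n * (β - α) := by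
      rw [div_lt_iff₀ hε] at hn
      linarith
    obtain ⟨k₁, hk₁⟩ := (Metric.tendsto_atTop.1 (hco xa)) 1 one_pos
    obtain ⟨k₂, hk₂⟩ := (Metric.tendsto_atTop.1 (hco xb)) 1 one_pos
    set l : ℕ := max (max k₁ k₂) (φ 0 + n) with hl
    set m : ℕ := φ l - φ 0 with hm
    have hφl : φ 0 ≤ φ l := hφ.monotone (Nat.zero_le l)
    have hmφ : m + φ 0 = φ l := by omega
    have hmn : n ≤ m := by
      have h3 : l ≤ φ l := hφ.le_apply
      have h4 : φ 0 + n ≤ l := le_max_right _ _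
      omega
    have hPm : ∀ x, P^[m] (fk 0) x = P^[φ l] f x - P^[φ 0] f x₀ := by
      intro x
      have := hfkIter m 0 x
      rwa [hmφ] at this
    have hclose : ∀ x, |P^[m] g x - P^[m] (fk 0) x| ≤ D 0 :=
      keyIter m g (fk 0) (D 0) (fun y => by rw [abs_sub_comm]; exact hDcoord 0 y)
    have hca : |fk l xa - g xa| < 1 := by
      have := hk₁ l ((le_max_left k₁ k₂).trans (le_max_left _ _))
      rwa [Real.dist_eq] at this
    have hcb : |fk l xb - g xb| < 1 := by
      have := hk₂ l ((le_max_right k₁ k₂).trans (le_max_left _ _))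
      rwa [Real.dist_eq] at this
    have e1 : P^[m] g xa - g xa = m * β := htelA m
    have e2 : P^[m] g xb - g xb = m * α := htelB m
    have e3 := abs_le.1 (hclose xa)
    have e4 := abs_le.1 (hclose xb)
    have e5 := hPm xa
    have e6 := hPm xb
    have hca' := abs_le.1 hca.le
    have hcb' := abs_le.1 hcb.le
    have hflza : fk l xa = P^[φ l] f xa - P^[φ l] f x₀ := rfl
    have hflzb : fk l xb = P^[φ l] f xb - P^[φ l] f x₀ := rfl
    have hbig : (m:ℝ) * (β - α) ≤ 2 * D 0 + 2 := by
      have heq2 : (m:ℝ) * (β - α) = (P^[m] g xa - g xa) - (P^[m] g xb - g xb) := by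
        rw [e1, e2]; ring
      rw [heq2]
      have key1 : P^[m] g xa ≤ P^[φ l] f xa - P^[φ 0] f x₀ + D 0 := by
        rw [← e5]; linarith [e3.2]
      have key2 : P^[φ l] f xb - P^[φ 0] f x₀ - D 0 ≤ P^[m] g xb := by
        rw [← e6]; linarith [e4.1]
      have key3 : P^[φ l] f xa - P^[φ l] f xb ≤ g xa - g xb + 2 := by
        have h9 : P^[φ l] f xa - P^[φ l] f xb = fk l xa - fk l xb := by
          rw [hflza, hflzb]; ring
        rw [h9]
        linarith [hca'.1, hca'.2, hcb'.1, hcb'.2]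
      linarith
    have hfin : (n:ℝ) * (β - α) ≤ (m:ℝ) * (β - α) := by
      apply mul_le_mul_of_nonneg_right _ hε.le
      exact_mod_cast hmn
    linarith
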